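/- Let f : ℝ → ℝ satisfy f(0) = 0 and be differentiable everywhere with f'(t) = (1 + 2 f(t)²)^{-1/2} for all t ∈ ℝ. Then |f(t)| ≤ 2^{1/4} |t|^{1/2} for all t ∈ ℝ. -/

import Mathlib

/-- Lemma 2.1 (3): `|f t| ≤ 2^(1/4) |t|^(1/2)` for all `t`. -/
theorem dual_change_of_variables_abs_le_sqrt (f : ℝ → ℝ)
    (hf0 : f 0 = 0)
    (hf : ∀ t : ℝ, HasDerivAt f ((1 + 2 * (f t) ^ 2) ^ (-(1 / 2 : ℝ))) t) :
    ∀ t : ℝ, |f t| ≤ (2 : ℝ) ^ (1 / 4 : ℝ) * |t| ^ (1 / 2 : ℝ) := by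
  intro t
  -- derivative of f^2
  set g' : ℝ → ℝ := fun s => 2 * f s * ((1 + 2 * (f s) ^ 2) ^ (-(1 / 2 : ℝ))) with hg'
  have hderiv : ∀ s : ℝ, HasDerivAt (fun u => (f u) ^ 2) (g' s) s := by
    intro s
    have := (hf s).fun_pow 2
    simpa [hg', mul_comm, mul_assoc, mul_left_comm] using this
  -- bound on the derivative
  have hbound : ∀ s : ℝ, ‖g' s‖ ≤ Real.sqrt 2 := by
    intro s
    set x := f s
    have hA : (0:ℝ) < 1 + 2 * x ^ 2 := by positivity
    have hrw : (1 + 2 * x ^ 2 : ℝ) ^ (-(1 / 2 : ℝ)) = (Real.sqrt (1 + 2 * x ^ 2))⁻¹ := by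
      rw [Real.rpow_neg hA.le, Real.sqrt_eq_rpow]
    have hspos : (0:ℝ) < Real.sqrt (1 + 2 * x ^ 2) := Real.sqrt_pos.mpr hA
    have key : 2 * |x| ≤ Real.sqrt 2 * Real.sqrt (1 + 2 * x ^ 2) := by
      rw [← Real.sqrt_mul (by norm_num : (0:ℝ) ≤ 2)]
      have h1 : 2 * |x| = Real.sqrt (4 * x ^ 2) := by
        rw [show (4:ℝ) * x ^ 2 = (2 * |x|) ^ 2 by rw [mul_pow, sq_abs]; ring,
          Real.sqrt_sq (by positivity)]
      rw [h1]
      exact Real.sqrt_le_sqrt (by nlinarith)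
    have heq : g' s = 2 * x * (Real.sqrt (1 + 2 * x ^ 2))⁻¹ := by rw [hg']; simp [← hrw]; rfl
    have : ‖g' s‖ = 2 * |x| / Real.sqrt (1 + 2 * x ^ 2) := by
      rw [heq, Real.norm_eq_abs, abs_mul, abs_mul, abs_two, abs_inv,
        abs_of_pos hspos, div_eq_mul_inv]
    rw [this, div_le_iff₀ hspos]
    exact key
  -- mean value inequality
  have hmv : ‖(f t) ^ 2 - (f 0) ^ 2‖ ≤ Real.sqrt 2 * ‖t - 0‖ := by
    apply convex_univ.norm_image_sub_le_of_norm_hasDerivWithin_le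
      (fun x _ => (hderiv x).hasDerivWithinAt) (fun x _ => hbound x) (Set.mem_univ 0)
      (Set.mem_univ t)
  rw [hf0] at hmv
  simp only [ne_eq, sub_zero] at hmv
  have hsq : (f t) ^ 2 ≤ Real.sqrt 2 * |t| := by
    calc (f t) ^ 2 = |(f t) ^ 2 - 0 ^ 2| := by simp [abs_of_nonneg (sq_nonneg (f t))]
    _ ≤ Real.sqrt 2 * |t| := hmv
  have h1 : |f t| = Real.sqrt ((f t) ^ 2) := (Real.sqrt_sq_eq_abs _).symm
  rw [h1]
  calc Real.sqrt ((f t) ^ 2) ≤ Real.sqrt (Real.sqrt 2 * |t|) := Real.sqrt_le_sqrt hsq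
    _ = Real.sqrt (Real.sqrt 2) * Real.sqrt |t| := Real.sqrt_mul (Real.sqrt_nonneg _) _
    _ = (2 : ℝ) ^ (1 / 4 : ℝ) * |t| ^ (1 / 2 : ℝ) := by
        rw [Real.sqrt_eq_rpow, Real.sqrt_eq_rpow, Real.sqrt_eq_rpow,
          ← Real.rpow_mul (by norm_num : (0:ℝ) ≤ 2)]
        norm_num
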